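/- arXiv:1907.05824 — 2 statements merged into one kernel-verified Lean document; each statement's English description precedes it below -/
import Mathlib

section
/- If words x and y over the positive integers are Knuth equivalent, then w(x) = w(y) and α(x) = α(y), where w_i counts occurrences of i and α_i(x) = max over suffixes x̃ of x of (w_{i+1}(x̃) − w_i(x̃)). Equivalently, u_x(λ) = u_y(λ) for every partition λ. -/
/-- A partition, represented by its column lengths (the conjugate):
`c i` is the number of boxes in column `i`. -/
def IsPartition (c : ℕ+ → ℕ) : Prop :=
  (∀ i : ℕ+, c (i + 1) ≤ c i) ∧ ∃ N : ℕ+, ∀ i : ℕ+, N ≤ i → c i = 0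

open Classical in
/-- The Schur operator `u_i`: add a box to column `i` if the result is a
partition, else `none` (representing `0`). -/
noncomputable def addBox (i : ℕ+) (c : ℕ+ → ℕ) : Option (ℕ+ → ℕ) :=
  if IsPartition (Function.update c i (c i + 1)) then
    some (Function.update c i (c i + 1))
  else none

/-- `u_x = u_{x_1} ∘ ⋯ ∘ u_{x_l}` for a word `x = x_1 ⋯ x_l`. -/
noncomputable def schurWord (x : List ℕ+) (c : ℕ+ → ℕ) : Option (ℕ+ → ℕ) :=
  x.foldr (fun i o => o.bind (addBox i)) (some c)

/-- `α_i(x)`: the maximum over suffixes `s` of `x` of `w_{i+1}(s) - w_i(s)`. -/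
def alpha (i : ℕ+) (x : List ℕ+) : ℕ :=
  (x.tails.map (fun s => s.count (i + 1) - s.count i)).foldr max 0

/-- An elementary Knuth move on consecutive subwords:
`bac ↔ bca` for `a < b ≤ c`, and `acb ↔ cab` for `a ≤ b < c`. -/
inductive KnuthStep : List ℕ+ → List ℕ+ → Prop
  | k1 (p s : List ℕ+) (a b c : ℕ+) (h1 : a < b) (h2 : b ≤ c) :
      KnuthStep (p ++ [b, a, c] ++ s) (p ++ [b, c, a] ++ s)
  | k2 (p s : List ℕ+) (a b c : ℕ+) (h1 : a ≤ b) (h2 : b < c) :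
      KnuthStep (p ++ [a, c, b] ++ s) (p ++ [c, a, b] ++ s)

/-- Knuth equivalence of words. -/
def KnuthEquiv : List ℕ+ → List ℕ+ → Prop := Relation.EqvGen KnuthStep

/- ### auxiliary -/

lemma pnat_ne_succ (j : ℕ+) : j ≠ j + 1 := by
  intro h
  have : (j : ℕ) = (j : ℕ) + 1 := by exact_mod_cast congrArg PNat.val h
  omega

def Ok (i : ℕ+) (d : ℕ+ → ℕ) : Prop := ∀ j : ℕ+, i = j + 1 → d i < d j

lemma isPartition_update_iff {d : ℕ+ → ℕ} (hd : IsPartition d) (i : ℕ+) :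
    IsPartition (Function.update d i (d i + 1)) ↔ Ok i d := by
  constructor
  · rintro ⟨h1, -⟩ j hj
    have h := h1 j
    rw [← hj] at h
    rw [Function.update_self, Function.update_of_ne] at h
    · omega
    · rw [hj]; exact pnat_ne_succ j
  · intro hok
    refine ⟨fun k => ?_, ?_⟩
    · rcases eq_or_ne (k + 1) i with h | h
      · have hk : k ≠ i := by
          intro hk; rw [hk] at h; exact pnat_ne_succ i h.symm
        rw [h, Function.update_self, Function.update_of_ne hk]
        exact hok k h.symm
      · rcases eq_or_ne k i with h2 | h2
        · rw [Function.update_of_ne h, h2, Function.update_self]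
          exact le_trans (hd.1 i) (Nat.le_succ _)
        · rw [Function.update_of_ne h, Function.update_of_ne h2]
          exact hd.1 k
    · obtain ⟨N, hN⟩ := hd.2
      refine ⟨N + i, fun j hj => ?_⟩
      have hj' : (N : ℕ) + (i : ℕ) ≤ (j : ℕ) := by
        have := (PNat.coe_le_coe _ _).2 hj
        simpa [PNat.add_coe] using this
      have hi : (i : ℕ) ≠ (j : ℕ) := by have := N.pos; omega
      have hNj : N ≤ j := (PNat.coe_le_coe _ _).1 (by have := i.pos; omega)
      rw [Function.update_of_ne (fun h => hi (congrArg PNat.val h.symm)), hN j hNj]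

lemma addBox_some {d : ℕ+ → ℕ} (hd : IsPartition d) {i : ℕ+} (h : Ok i d) :
    addBox i d = some (Function.update d i (d i + 1)) := by
  rw [addBox, if_pos ((isPartition_update_iff hd i).2 h)]

lemma addBox_none {d : ℕ+ → ℕ} (hd : IsPartition d) {i : ℕ+} (h : ¬ Ok i d) :
    addBox i d = none := by
  rw [addBox, if_neg (fun hp => h ((isPartition_update_iff hd i).1 hp))]

lemma isPartition_update {d : ℕ+ → ℕ} (hd : IsPartition d) {i : ℕ+} (h : Ok i d) :
    IsPartition (Function.update d i (d i + 1)) :=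
  (isPartition_update_iff hd i).2 h

lemma ok_update {d : ℕ+ → ℕ} {i k : ℕ+} {v : ℕ} (h1 : k ≠ i)
    (h2 : ∀ j : ℕ+, i = j + 1 → k ≠ j) :
    Ok i (Function.update d k v) ↔ Ok i d := by
  constructor <;> intro H j hj <;> have h3 := H j hj
  · rwa [Function.update_of_ne (Ne.symm h1), Function.update_of_ne (Ne.symm (h2 j hj))] at h3
  · rwa [Function.update_of_ne (Ne.symm h1), Function.update_of_ne (Ne.symm (h2 j hj))]

lemma ok_succ {d : ℕ+ → ℕ} (a : ℕ+) : Ok (a + 1) d ↔ d (a + 1) < d a := by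
  constructor
  · exact fun H => H a rfl
  · intro h j hj
    have : a = j := by
      have : (a : ℕ) + 1 = (j : ℕ) + 1 := by exact_mod_cast congrArg PNat.val hj
      exact PNat.coe_inj.1 (by omega)
    rwa [← this]

lemma addBox_isPartition {i : ℕ+} {d e : ℕ+ → ℕ} (h : addBox i d = some e) :
    IsPartition e := by
  rw [addBox] at h
  split at h
  · cases h; assumption
  · cases h

/- commutation when columns are far apart -/
lemma comm_far {a c : ℕ+} (h : (a : ℕ) + 1 < c) {d : ℕ+ → ℕ} (hd : IsPartition d) :
    (addBox c d).bind (addBox a) = (addBox a d).bind (addBox c) := by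
  have hac : a ≠ c := by intro hh; have := congrArg PNat.val hh; omega
  have hca : c ≠ a := Ne.symm hac
  have hA' : ∀ j : ℕ+, a = j + 1 → c ≠ j := by
    intro j hj hcj
    have e1 : (a : ℕ) = (j : ℕ) + 1 := by exact_mod_cast congrArg PNat.val hj
    have e2 : (c : ℕ) = (j : ℕ) := congrArg PNat.val hcj
    omega
  have hC' : ∀ j : ℕ+, c = j + 1 → a ≠ j := by
    intro j hj haj
    have e1 : (c : ℕ) = (j : ℕ) + 1 := by exact_mod_cast congrArg PNat.val hj
    have e2 : (a : ℕ) = (j : ℕ) := congrArg PNat.val haj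
    omega
  by_cases hA : Ok a d <;> by_cases hC : Ok c d
  · rw [addBox_some hd hC, addBox_some hd hA, Option.bind_some, Option.bind_some,
      addBox_some (isPartition_update hd hC) ((ok_update hca hA').2 hA),
      addBox_some (isPartition_update hd hA) ((ok_update hac hC').2 hC)]
    simp only [Function.update_of_ne hac, Function.update_of_ne hca]
    rw [Function.update_comm hca]
  · rw [addBox_none hd hC, Option.bind_none, addBox_some hd hA, Option.bind_some,
      addBox_none (isPartition_update hd hA) (fun hh => hC ((ok_update hac hC').1 hh))]
  · rw [addBox_some hd hC, Option.bind_some, addBox_none hd hA, Option.bind_none,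
      addBox_none (isPartition_update hd hC) (fun hh => hA ((ok_update hca hA').1 hh))]
  · rw [addBox_none hd hC, addBox_none hd hA, Option.bind_none, Option.bind_none]

lemma adj_aux (a : ℕ+) : ∀ j : ℕ+, a = j + 1 → a + 1 ≠ j := by
  intro j hj hcj
  have e1 : (a : ℕ) = (j : ℕ) + 1 := by exact_mod_cast congrArg PNat.val hj
  have e2 : (a : ℕ) + 1 = (j : ℕ) := by exact_mod_cast congrArg PNat.val hcj
  omega

lemma succ_ne (a : ℕ+) : a + 1 ≠ a := Ne.symm (pnat_ne_succ a)

/- adjacent case for k1 : u_{a+1} u_a u_{a+1} = u_{a+1} u_{a+1} u_a -/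
lemma triple1_adj {a : ℕ+} {d : ℕ+ → ℕ} (hd : IsPartition d) :
    ((addBox (a + 1) d).bind (addBox a)).bind (addBox (a + 1)) =
      ((addBox a d).bind (addBox (a + 1))).bind (addBox (a + 1)) := by
  have hne := pnat_ne_succ a
  by_cases hA : Ok a d
  · by_cases hC : d (a + 1) < d a
    · have hinner : (addBox (a + 1) d).bind (addBox a) = (addBox a d).bind (addBox (a + 1)) := by
        rw [addBox_some hd ((ok_succ a).2 hC), addBox_some hd hA, Option.bind_some,
          Option.bind_some,
          addBox_some (isPartition_update hd ((ok_succ a).2 hC))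
            ((ok_update (succ_ne a) (adj_aux a)).2 hA),
          addBox_some (isPartition_update hd hA)
            ((ok_succ a).2 (by
              rw [Function.update_of_ne (succ_ne a), Function.update_self]
              omega))]
        simp only [Function.update_of_ne hne, Function.update_of_ne (succ_ne a),
          Function.update_self]
        rw [Function.update_comm (succ_ne a)]
      rw [hinner]
    · -- LHS dies immediately; RHS survives two steps then dies
      rw [addBox_none hd (fun H => hC ((ok_succ a).1 H)), Option.bind_none, Option.bind_none,
        addBox_some hd hA, Option.bind_some]
      set d1 := Function.update d a (d a + 1) with hd1def
      have hd1 : IsPartition d1 := isPartition_update hd hA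
      have hOk1 : Ok (a + 1) d1 := (ok_succ a).2 (by
        rw [hd1def, Function.update_of_ne (succ_ne a), Function.update_self]
        have := hd.1 a; omega)
      rw [addBox_some hd1 hOk1, Option.bind_some]
      set d2 := Function.update d1 (a + 1) (d1 (a + 1) + 1) with hd2def
      have hd2 : IsPartition d2 := isPartition_update hd1 hOk1
      refine (addBox_none hd2 (fun H => ?_)).symm
      have h2 := (ok_succ a).1 H
      rw [hd2def, Function.update_self, Function.update_of_ne hne, hd1def,
        Function.update_of_ne (succ_ne a), Function.update_self] at h2
      omega
  · have hnone : (addBox (a + 1) d).bind (addBox a) = none := by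
      by_cases hC : Ok (a + 1) d
      · rw [addBox_some hd hC, Option.bind_some,
          addBox_none (isPartition_update hd hC)
            (fun H => hA ((ok_update (succ_ne a) (adj_aux a)).1 H))]
      · rw [addBox_none hd hC, Option.bind_none]
    rw [hnone, addBox_none hd hA, Option.bind_none, Option.bind_none]

/- adjacent case for k2 : u_a u_{a+1} u_a = u_{a+1} u_a u_a -/
lemma triple2_adj {a : ℕ+} {d : ℕ+ → ℕ} (hd : IsPartition d) :
    ((addBox a d).bind (addBox (a + 1))).bind (addBox a) =
      ((addBox a d).bind (addBox a)).bind (addBox (a + 1)) := by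
  have hne := pnat_ne_succ a
  by_cases hA : Ok a d
  · rw [addBox_some hd hA, Option.bind_some, Option.bind_some]
    set d1 := Function.update d a (d a + 1) with hd1def
    have hd1 : IsPartition d1 := isPartition_update hd hA
    have hOk1 : Ok (a + 1) d1 := (ok_succ a).2 (by
      rw [hd1def, Function.update_of_ne (succ_ne a), Function.update_self]
      have := hd.1 a; omega)
    rw [addBox_some hd1 hOk1]
    set e := Function.update d1 (a + 1) (d1 (a + 1) + 1) with hedef
    have he : IsPartition e := isPartition_update hd1 hOk1
    by_cases hA' : Ok a d1
    · rw [Option.bind_some,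
        addBox_some he ((ok_update (succ_ne a) (adj_aux a)).2 hA'),
        addBox_some hd1 hA', Option.bind_some]
      set g := Function.update d1 a (d1 a + 1) with hgdef
      have hg : IsPartition g := isPartition_update hd1 hA'
      have hOkg : Ok (a + 1) g := (ok_succ a).2 (by
        rw [hgdef, Function.update_of_ne (succ_ne a), Function.update_self]
        have := hd1.1 a; omega)
      rw [addBox_some hg hOkg]
      rw [hedef, hgdef]
      simp only [Function.update_of_ne hne, Function.update_of_ne (succ_ne a),
        Function.update_self]
      rw [Function.update_comm (succ_ne a)]
    · rw [Option.bind_some,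
        addBox_none he (fun H => hA' ((ok_update (succ_ne a) (adj_aux a)).1 H)),
        addBox_none hd1 hA', Option.bind_none]
  · rw [addBox_none hd hA, Option.bind_none, Option.bind_none, Option.bind_none]

/- the two triple identities -/
lemma triple1 {a b c : ℕ+} (h1 : a < b) (h2 : b ≤ c) {d : ℕ+ → ℕ} (hd : IsPartition d) :
    ((addBox c d).bind (addBox a)).bind (addBox b) =
      ((addBox a d).bind (addBox c)).bind (addBox b) := by
  have h1' : (a : ℕ) < b := h1
  have h2' : (b : ℕ) ≤ c := h2
  rcases lt_or_ge ((a : ℕ) + 1) (c : ℕ) with hfar | hnear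
  · rw [comm_far hfar hd]
  · have hc : c = a + 1 := by
      apply PNat.coe_inj.1; push_cast; omega
    have hb : b = a + 1 := by
      apply PNat.coe_inj.1; push_cast
      have : (c : ℕ) = (a : ℕ) + 1 := by exact_mod_cast congrArg PNat.val hc
      omega
    subst hc; subst hb
    exact triple1_adj hd

lemma triple2 {a b c : ℕ+} (h1 : a ≤ b) (h2 : b < c) {d : ℕ+ → ℕ} (hd : IsPartition d) :
    ((addBox b d).bind (addBox c)).bind (addBox a) =
      ((addBox b d).bind (addBox a)).bind (addBox c) := by
  have h1' : (a : ℕ) ≤ b := h1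
  have h2' : (b : ℕ) < c := h2
  rcases lt_or_ge ((a : ℕ) + 1) (c : ℕ) with hfar | hnear
  · cases haB : addBox b d with
    | none => simp
    | some e =>
      have he := addBox_isPartition haB
      simp only [Option.bind_some]
      exact comm_far hfar he
  · have hc : c = a + 1 := by apply PNat.coe_inj.1; push_cast; omega
    have hb : b = a := by
      apply PNat.coe_inj.1
      have : (c : ℕ) = (a : ℕ) + 1 := by exact_mod_cast congrArg PNat.val hc
      omega
    subst hc; subst hb
    exact triple2_adj hd

/- ### schurWord lemmas -/

lemma schurWord_append (p u : List ℕ+) (c : ℕ+ → ℕ) :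
    schurWord (p ++ u) c = p.foldr (fun i o => o.bind (addBox i)) (schurWord u c) := by
  rw [schurWord, List.foldr_append]; rfl

lemma schurWord_isPartition {x : List ℕ+} {c d : ℕ+ → ℕ} (hc : IsPartition c)
    (h : schurWord x c = some d) : IsPartition d := by
  induction x generalizing d with
  | nil => cases h; exact hc
  | cons v x ih =>
    rw [schurWord, List.foldr_cons] at h
    cases he : List.foldr (fun i o => o.bind (addBox i)) (some c) x with
    | none => rw [he] at h; cases h
    | some e =>
      rw [he, Option.bind_some] at h
      exact addBox_isPartition h

/- ### alpha lemmas -/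

lemma alpha_nil (i : ℕ+) : alpha i [] = 0 := by simp [alpha]

lemma alpha_cons (i v : ℕ+) (z : List ℕ+) :
    alpha i (v :: z) = max ((v :: z).count (i + 1) - (v :: z).count i) (alpha i z) := by
  simp [alpha, List.tails]

lemma alpha_self_le (i : ℕ+) (z : List ℕ+) :
    z.count (i + 1) - z.count i ≤ alpha i z := by
  cases z with
  | nil => simp
  | cons v z => rw [alpha_cons]; exact le_max_left _ _

lemma alpha_append_congr (i : ℕ+) (p u1 u2 : List ℕ+)
    (hc1 : u1.count i = u2.count i) (hc2 : u1.count (i + 1) = u2.count (i + 1))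
    (ha : alpha i u1 = alpha i u2) :
    alpha i (p ++ u1) = alpha i (p ++ u2) := by
  induction p with
  | nil => simpa using ha
  | cons v p ih =>
    rw [List.cons_append, List.cons_append, alpha_cons, alpha_cons, ih]
    simp only [List.count_cons, List.count_append, hc1, hc2]

set_option maxHeartbeats 1000000 in
lemma alpha_core1 (i a b c : ℕ+) (s : List ℕ+) (h1 : a < b) (h2 : b ≤ c) :
    alpha i ([b, a, c] ++ s) = alpha i ([b, c, a] ++ s) := by
  have hs := alpha_self_le i s
  have h1' : (a : ℕ) < b := h1
  have h2' : (b : ℕ) ≤ c := h2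
  simp only [List.cons_append, List.nil_append, alpha_cons, List.count_cons, beq_iff_eq]
  simp only [← PNat.coe_inj, PNat.add_coe, PNat.one_coe]
  split_ifs <;> omega

lemma alpha_core2 (i a b c : ℕ+) (s : List ℕ+) (h1 : a ≤ b) (h2 : b < c) :
    alpha i ([a, c, b] ++ s) = alpha i ([c, a, b] ++ s) := by
  have hs := alpha_self_le i s
  have h1' : (a : ℕ) ≤ b := h1
  have h2' : (b : ℕ) < c := h2
  simp only [List.cons_append, List.nil_append, alpha_cons, List.count_cons, beq_iff_eq]
  simp only [← PNat.coe_inj, PNat.add_coe, PNat.one_coe]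
  split_ifs <;> omega

theorem stmt10 (x y : List ℕ+) (h : KnuthEquiv x y) :
    (∀ i : ℕ+, x.count i = y.count i) ∧
    (∀ i : ℕ+, alpha i x = alpha i y) ∧
    (∀ c : ℕ+ → ℕ, IsPartition c → schurWord x c = schurWord y c) := by
  induction h with
  | rel x y hstep =>
    cases hstep with
    | k1 p s a b c h1 h2 =>
      refine ⟨?_, ?_, ?_⟩
      · intro i
        simp only [List.count_append, List.count_cons, List.count_nil]
        split_ifs <;> omega
      · intro i
        rw [List.append_assoc, List.append_assoc]
        refine alpha_append_congr i p _ _ ?_ ?_ (alpha_core1 i a b c s h1 h2)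
        · simp only [List.count_append, List.count_cons, List.count_nil]
          split_ifs <;> omega
        · simp only [List.count_append, List.count_cons, List.count_nil]
          split_ifs <;> omega
      · intro c0 hc0
        have hkey : schurWord ([b, a, c] ++ s) c0 = schurWord ([b, c, a] ++ s) c0 := by
          rw [schurWord_append, schurWord_append]
          cases hsc : schurWord s c0 with
          | none => simp
          | some d =>
            have hd := schurWord_isPartition hc0 hsc
            simp only [List.foldr_cons, List.foldr_nil, Option.bind_some]
            exact triple1 h1 h2 hd
        rw [List.append_assoc, List.append_assoc, schurWord_append, hkey, ← schurWord_append]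
    | k2 p s a b c h1 h2 =>
      refine ⟨?_, ?_, ?_⟩
      · intro i
        simp only [List.count_append, List.count_cons, List.count_nil]
        split_ifs <;> omega
      · intro i
        rw [List.append_assoc, List.append_assoc]
        refine alpha_append_congr i p _ _ ?_ ?_ (alpha_core2 i a b c s h1 h2)
        · simp only [List.count_append, List.count_cons, List.count_nil]
          split_ifs <;> omega
        · simp only [List.count_append, List.count_cons, List.count_nil]
          split_ifs <;> omega
      · intro c0 hc0
        have hkey : schurWord ([a, c, b] ++ s) c0 = schurWord ([c, a, b] ++ s) c0 := by
          rw [schurWord_append, schurWord_append]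
          cases hsc : schurWord s c0 with
          | none => simp
          | some d =>
            have hd := schurWord_isPartition hc0 hsc
            simp only [List.foldr_cons, List.foldr_nil, Option.bind_some]
            exact triple2 h1 h2 hd
        rw [List.append_assoc, List.append_assoc, schurWord_append, hkey, ← schurWord_append]
  | refl x => exact ⟨fun _ => rfl, fun _ => rfl, fun _ _ => rfl⟩
  | symm x y _ ih =>
    exact ⟨fun i => (ih.1 i).symm, fun i => (ih.2.1 i).symm, fun c hc => (ih.2.2 c hc).symm⟩
  | trans x y z _ _ ih1 ih2 =>
    exact ⟨fun i => (ih1.1 i).trans (ih2.1 i), fun i => (ih1.2.1 i).trans (ih2.2.1 i),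
      fun c hc => (ih1.2.2 c hc).trans (ih2.2.2 c hc)⟩
end

section
/- For any positive integers i and k and any partition λ, u_{i+1}(u_{i+2}(u_i^k(u_{i+1}(λ)))) = u_{i+2}(u_{i+1}(u_i^k(u_{i+1}(λ)))). -/
lemma pnat_ne (a b : ℕ+) (h : (a:ℕ) ≠ (b:ℕ)) : a ≠ b := fun e => h (by rw [e])

lemma two_eq (i : ℕ+) : i + 2 = (i + 1) + 1 := by
  rw [add_assoc]; rfl

lemma crit (t : ℕ+) (μ : ℕ+ → ℕ) (hμ : IsPartition μ) :
    IsPartition (Function.update μ (t+1) (μ (t+1) + 1)) ↔ μ (t+1) < μ t := by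
  obtain ⟨hmono, N, hN⟩ := hμ
  constructor
  · rintro ⟨h1, -⟩
    have := h1 t
    rw [Function.update_self, Function.update_of_ne (pnat_ne _ _ (by push_cast; omega))] at this
    omega
  · intro h
    refine ⟨?_, N + (t+2), ?_⟩
    · intro m
      by_cases hm1 : m + 1 = t + 1
      · have hm : m = t := by
          have : (m:ℕ) + 1 = (t:ℕ) + 1 := by exact_mod_cast congrArg (PNat.val) hm1
          exact PNat.coe_injective (by omega)
        subst hm
        rw [Function.update_self, Function.update_of_ne (pnat_ne _ _ (by push_cast; omega))]
        omega
      · by_cases hm2 : m = t + 1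
        · subst hm2
          rw [Function.update_of_ne hm1, Function.update_self]
          have := hmono (t+1)
          omega
        · rw [Function.update_of_ne hm1, Function.update_of_ne hm2]
          exact hmono m
    · intro m hm
      have h1 : (N:ℕ) + ((t:ℕ)+2) ≤ (m:ℕ) := by exact_mod_cast hm
      rw [Function.update_of_ne (pnat_ne _ _ (by push_cast; omega))]
      exact hN m (by exact_mod_cast (by omega : (N:ℕ) ≤ (m:ℕ)))

lemma addBox_eval {j : ℕ+} {c d : ℕ+ → ℕ} (h : addBox j c = some d) :
    IsPartition d ∧ d = Function.update c j (c j + 1) := by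
  unfold addBox at h
  split_ifs at h with hp
  · obtain rfl := Option.some_inj.mp h
    exact ⟨hp, rfl⟩

lemma addBox_comm (i : ℕ+) (μ : ℕ+ → ℕ) (hμ : IsPartition μ) (h : μ (i+2) < μ (i+1)) :
    (addBox (i+2) μ).bind (addBox (i+1)) = (addBox (i+1) μ).bind (addBox (i+2)) := by
  have e2 : i + 2 = (i+1) + 1 := two_eq i
  have ne12 : i + 1 ≠ i + 2 := pnat_ne _ _ (by push_cast; omega)
  have ne21 : i + 2 ≠ i + 1 := ne12.symm
  have nei2 : i ≠ i + 2 := pnat_ne _ _ (by push_cast; omega)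
  have nei1 : i ≠ i + 1 := pnat_ne _ _ (by push_cast; omega)
  -- addBox (i+2) μ succeeds
  have hp1 : IsPartition (Function.update μ (i+2) (μ (i+2) + 1)) := by
    rw [e2]; exact (crit (i+1) μ hμ).mpr (by rw [← e2]; exact h)
  have hb1 : addBox (i+2) μ = some (Function.update μ (i+2) (μ (i+2) + 1)) := by
    unfold addBox; rw [if_pos hp1]
  set D1 := Function.update μ (i+2) (μ (i+2) + 1) with hD1
  have hD1i1 : D1 (i+1) = μ (i+1) := Function.update_of_ne ne12 _ _
  have hD1i : D1 i = μ i := Function.update_of_ne nei2 _ _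
  by_cases hlt : μ (i+1) < μ i
  · -- both succeed
    have hp2 : IsPartition (Function.update μ (i+1) (μ (i+1) + 1)) :=
      (crit i μ hμ).mpr hlt
    have hb2 : addBox (i+1) μ = some (Function.update μ (i+1) (μ (i+1) + 1)) := by
      unfold addBox; rw [if_pos hp2]
    set D2 := Function.update μ (i+1) (μ (i+1) + 1) with hD2
    have hD2i2 : D2 (i+2) = μ (i+2) := Function.update_of_ne ne21 _ _
    have hD2i1 : D2 (i+1) = μ (i+1) + 1 := Function.update_self _ _ _
    have hkey : Function.update D1 (i+1) (D1 (i+1) + 1)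
        = Function.update D2 (i+2) (D2 (i+2) + 1) := by
      rw [hD1i1, hD2i2, hD1, hD2, Function.update_comm ne21]
    have hp12 : IsPartition (Function.update D1 (i+1) (D1 (i+1) + 1)) := by
      refine (crit i D1 hp1).mpr ?_
      rw [hD1i1, hD1i]; exact hlt
    have hp21 : IsPartition (Function.update D2 (i+2) (D2 (i+2) + 1)) := by
      rw [← hkey]; exact hp12
    rw [hb1, hb2, Option.bind_some, Option.bind_some]
    unfold addBox
    rw [if_pos hp12, if_pos hp21, hkey]
  · -- both fail at the (i+1) step
    have hp12 : ¬ IsPartition (Function.update D1 (i+1) (D1 (i+1) + 1)) := by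
      rw [crit i D1 hp1, hD1i1, hD1i]; exact hlt
    have hp2 : ¬ IsPartition (Function.update μ (i+1) (μ (i+1) + 1)) := by
      rw [crit i μ hμ]; exact hlt
    rw [hb1, Option.bind_some]
    unfold addBox
    rw [if_neg hp12, if_neg hp2, Option.bind_none]

lemma schurWord_cons (x : ℕ+) (l : List ℕ+) (c : ℕ+ → ℕ) :
    schurWord (x :: l) c = (schurWord l c).bind (addBox x) := rfl

lemma invar (i : ℕ+) (c : ℕ+ → ℕ) (hc : IsPartition c) (n : ℕ) (μ : ℕ+ → ℕ)
    (h : schurWord (List.replicate n i ++ [i+1]) c = some μ) :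
    IsPartition μ ∧ μ (i+2) < μ (i+1) := by
  induction n generalizing μ with
  | zero =>
    simp only [List.replicate_zero, List.nil_append] at h
    rw [schurWord_cons] at h
    have h' : addBox (i+1) c = some μ := h
    obtain ⟨hp, rfl⟩ := addBox_eval h'
    refine ⟨hp, ?_⟩
    rw [Function.update_self, Function.update_of_ne (pnat_ne _ _ (by push_cast; omega))]
    have := hc.1 (i+1)
    rw [← two_eq] at this
    omega
  | succ n ih =>
    rw [List.replicate_succ, List.cons_append, schurWord_cons] at h
    cases hν : schurWord (List.replicate n i ++ [i+1]) c with
    | none => rw [hν] at h; simp at h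
    | some ν =>
      rw [hν, Option.bind_some] at h
      obtain ⟨hpν, hlt⟩ := ih ν hν
      obtain ⟨hp, rfl⟩ := addBox_eval h
      refine ⟨hp, ?_⟩
      rw [Function.update_of_ne (pnat_ne _ _ (by push_cast; omega)),
          Function.update_of_ne (pnat_ne _ _ (by push_cast; omega))]
      exact hlt

theorem stmt16 (i k : ℕ+) (c : ℕ+ → ℕ) (hc : IsPartition c) :
    schurWord ([i + 1, i + 2] ++ List.replicate (k : ℕ) i ++ [i + 1]) c =
      schurWord ([i + 2, i + 1] ++ List.replicate (k : ℕ) i ++ [i + 1]) c := by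
  have e : ∀ a b : ℕ+, schurWord ([a, b] ++ List.replicate (k : ℕ) i ++ [i + 1]) c
      = ((schurWord (List.replicate (k : ℕ) i ++ [i + 1]) c).bind (addBox b)).bind (addBox a) :=
    fun a b => rfl
  rw [e, e]
  cases hμ : schurWord (List.replicate (k : ℕ) i ++ [i + 1]) c with
  | none => simp
  | some μ =>
    obtain ⟨hp, hlt⟩ := invar i c hc (k : ℕ) μ hμ
    rw [Option.bind_some, Option.bind_some]
    exact addBox_comm i μ hp hlt
end
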